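/- Let a, b, c be non-collinear points and let O be a point lying strictly inside the triangle abc. If O is an admissible center for {a,b,c} (i.e., {a,b,c} ∪ {2O-a,2O-b,2O-c} is in convex position), then O lies in the closed medial triangle of abc, i.e., the triangle with vertices at the midpoints (a+b)/2, (b+c)/2, (c+a)/2. -/

import Mathlib

noncomputable section

abbrev Pt := EuclideanSpace ℝ (Fin 2)

/-- A set of points is in convex position if every point is an extreme point
of the convex hull of the set. -/
def InConvexPos (S : Set Pt) : Prop :=
  ∀ p ∈ S, p ∈ Set.extremePoints ℝ (convexHull ℝ S)

/-- The reflection of the set `S` through the point `O`. -/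
def reflSet (O : Pt) (S : Set Pt) : Set Pt := (fun x => (2 : ℝ) • O - x) '' S

/-- `O` is an admissible center for `S` if `S ∪ (2O - S)` is in convex position. -/
def AdmissibleCenter (O : Pt) (S : Set Pt) : Prop := InConvexPos (S ∪ reflSet O S)

/-- A set is in centrally symmetric convex position if it admits an admissible center. -/
def CSCPos (S : Set Pt) : Prop := ∃ O : Pt, AdmissibleCenter O S

lemma extremePoints_mono' {s t : Set Pt} (hst : s ⊆ t) {x : Pt}
    (hx : x ∈ Set.extremePoints ℝ t) (hxs : x ∈ s) : x ∈ Set.extremePoints ℝ s := by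
  rw [mem_extremePoints] at hx ⊢
  exact ⟨hxs, fun x₁ h₁ x₂ h₂ h => hx.2 x₁ (hst h₁) x₂ (hst h₂) h⟩

lemma coord_le_half (B : AffineBasis (Fin 3) ℝ Pt) (O : Pt)
    (hpos : ∀ i, 0 < B.coord i O)
    (hadm : AdmissibleCenter O (Set.range ⇑B)) (i : Fin 3) :
    B.coord i O ≤ 1 / 2 := by
  by_contra hgt
  push_neg at hgt
  set p : Pt := (2 : ℝ) • O - B i with hp
  have hline : p = AffineMap.lineMap (B i) O (2 : ℝ) := by
    simp [hp, AffineMap.lineMap_apply]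
    module
  have hcoord : ∀ j, B.coord j p = 2 * B.coord j O - if j = i then 1 else 0 := by
    intro j
    rw [hline, AffineMap.apply_lineMap, B.coord_apply]
    simp [AffineMap.lineMap_apply]
    ring
  have hpconv : p ∈ convexHull ℝ (Set.range ⇑B) := by
    rw [B.convexHull_eq_nonneg_coord]
    intro j
    rw [hcoord j]
    by_cases hji : j = i
    · simp [hji]; linarith [hgt]
    · simp [hji]; linarith [hpos j]
  have hpmem : p ∈ Set.range ⇑B ∪ reflSet O (Set.range ⇑B) :=
    Or.inr ⟨B i, Set.mem_range_self i, rfl⟩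
  have hext : p ∈ Set.extremePoints ℝ (convexHull ℝ (Set.range ⇑B)) := by
    refine extremePoints_mono' (convexHull_mono Set.subset_union_left) (hadm p hpmem) hpconv
  have hpr : p ∈ Set.range ⇑B := extremePoints_convexHull_subset hext
  obtain ⟨j, hj⟩ := hpr
  have h1 : B.coord j p = 1 := by rw [← hj, B.coord_apply]; simp
  rw [hcoord j] at h1
  have hlt1 : B.coord i O < 1 := by
    have hsum := B.sum_coord_apply_eq_one O
    have h2 : 0 < ∑ j ∈ Finset.univ.erase i, B.coord j O := by
      apply Finset.sum_pos (fun j _ => hpos j)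
      rw [← Finset.card_pos, Finset.card_erase_of_mem (Finset.mem_univ i)]
      simp
    have h3 := Finset.add_sum_erase Finset.univ (fun j => B.coord j O) (Finset.mem_univ i)
    linarith
  by_cases hji : j = i
  · subst hji
    simp at h1
    linarith
  · simp [hji] at h1
    -- also coord i p = 0 since p = B j and i ≠ j
    have h2 : B.coord i p = 0 := by rw [← hj, B.coord_apply]; simp [Ne.symm hji]
    rw [hcoord i] at h2
    simp at h2
    linarith

lemma combo_mem (x y z : Pt) {w1 w2 w3 : ℝ} (h1 : 0 ≤ w1) (h2 : 0 ≤ w2)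
    (h3 : 0 ≤ w3) (hsum : w1 + w2 + w3 = 1) :
    w1 • x + w2 • y + w3 • z ∈ convexHull ℝ ({x, y, z} : Set Pt) := by
  have hw1 : ∑ i, (![w1, w2, w3]) i = 1 := by rw [Fin.sum_univ_three]; simpa using hsum
  have := Finset.centerMass_mem_convexHull (Finset.univ : Finset (Fin 3))
    (w := ![w1, w2, w3]) (z := ![x, y, z]) (s := ({x, y, z} : Set Pt)) (by
      intro i _; fin_cases i <;> simpa)
    (by rw [hw1]; norm_num)
    (by intro i _; fin_cases i <;> simp)
  rw [Finset.centerMass_eq_of_sum_1 _ _ hw1, Fin.sum_univ_three] at this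
  simpa using this

theorem stmt6 (a b c : Pt) (hnc : ¬ Collinear ℝ {a, b, c}) (O : Pt)
    (hO : O ∈ interior (convexHull ℝ {a, b, c}))
    (hadm : AdmissibleCenter O {a, b, c}) :
    O ∈ convexHull ℝ {midpoint ℝ a b, midpoint ℝ b c, midpoint ℝ c a} := by
  classical
  have hai : AffineIndependent ℝ ![a, b, c] := affineIndependent_iff_not_collinear_set.mpr hnc
  have hspan : affineSpan ℝ (Set.range ![a, b, c]) = ⊤ := by
    rw [hai.affineSpan_eq_top_iff_card_eq_finrank_add_one]
    simp
  let B : AffineBasis (Fin 3) ℝ Pt := ⟨![a, b, c], hai, hspan⟩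
  have hrange : Set.range ⇑B = ({a, b, c} : Set Pt) := by
    show Set.range ![a, b, c] = _
    ext x
    simp [Matrix.range_cons, Matrix.range_empty, or_comm, or_left_comm]
  have hpos : ∀ i, 0 < B.coord i O := by
    rw [← Set.mem_setOf_eq (p := fun x => ∀ i, 0 < B.coord i x), ← B.interior_convexHull]
    rwa [hrange]
  have hhalf : ∀ i, B.coord i O ≤ 1 / 2 :=
    coord_le_half B O hpos (by rwa [hrange])
  set α := B.coord 0 O
  set β := B.coord 1 O
  set γ := B.coord 2 O
  have hsum : α + β + γ = 1 := by
    have := B.sum_coord_apply_eq_one O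
    rwa [Fin.sum_univ_three] at this
  have hOeq : O = α • a + β • b + γ • c := by
    have := B.linear_combination_coord_eq_self O
    rw [Fin.sum_univ_three] at this
    have ha : B 0 = a := rfl
    have hb : B 1 = b := rfl
    have hc : B 2 = c := rfl
    rw [ha, hb, hc] at this
    exact this.symm
  have key : O = (1 - 2*γ) • midpoint ℝ a b + (1 - 2*α) • midpoint ℝ b c
      + (1 - 2*β) • midpoint ℝ c a := by
    rw [midpoint_eq_smul_add, midpoint_eq_smul_add, midpoint_eq_smul_add, hOeq]
    have : α = 1 - β - γ := by linarith
    rw [this]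
    match_scalars <;> simp only [invOf_eq_inv] <;> ring
  rw [key]
  exact combo_mem _ _ _ (by linarith [hhalf 2]) (by linarith [hhalf 0]) (by linarith [hhalf 1])
    (by linarith)
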